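/- For every positive integer n, every real α with 0 < α ≤ 1/n and every real x ≥ 0, the second central moment satisfies Θ_{n,2}^[α](x) ≤ (3/n)·(x + 1/n) = (3/n)·η_n²(x). -/

import Mathlib

open MeasureTheory Filter

noncomputable section

/-- The Szász basis function `e^(-nu) (nu)^i / i!`. -/
def szaszBasis (n i : ℕ) (u : ℝ) : ℝ :=
  Real.exp (-(n : ℝ) * u) * ((n : ℝ) * u) ^ i / (Nat.factorial i : ℝ)

/-- The rising factorial `x^(i,-α) = ∏_{j=0}^{i-1} (x + jα)` with increment `α`. -/
def risingFac (x α : ℝ) (i : ℕ) : ℝ :=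
  ∏ j ∈ Finset.range i, (x + (j : ℝ) * α)

/-- The Durrmeyer modification of the generalized Szász-Mirakjan operators:
`U_n^[α](f; x) = n Σ_i (1+nα)^(−x/α) (α+1/n)^(−i) x^(i,−α)/i! ∫_0^∞ e^(−nu)(nu)^i/i! f(u) du`. -/
def U (n : ℕ) (α : ℝ) (f : ℝ → ℝ) (x : ℝ) : ℝ :=
  (n : ℝ) * ∑' i : ℕ,
    (1 + (n : ℝ) * α) ^ (-x / α) * (α + 1 / (n : ℝ)) ^ (-(i : ℤ)) *
      (risingFac x α i / (Nat.factorial i : ℝ)) *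
      ∫ u in Set.Ioi (0 : ℝ), szaszBasis n i u * f u

/-- The `m`-th central moment `Θ_{n,m}^[α](x) = U_n^[α]((t−x)^m; x)`. -/
def theta (n : ℕ) (α : ℝ) (m : ℕ) (x : ℝ) : ℝ :=
  U n α (fun t => (t - x) ^ m) x

end

noncomputable section AuxLemmas

section aux
open Real Set

lemma integrableOn_pow_mul_exp_aux {b : ℝ} (hb : 0 < b) (m : ℕ) :
    IntegrableOn (fun u : ℝ => u ^ m * Real.exp (-(b * u))) (Set.Ioi 0) := by
  have h := integrableOn_rpow_mul_exp_neg_mul_rpow (s := (m : ℝ)) (p := 1)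
    (neg_one_lt_zero.trans_le (Nat.cast_nonneg m)) one_pos hb
  refine h.congr_fun (fun u hu => ?_) measurableSet_Ioi
  dsimp only
  rw [Real.rpow_one, Real.rpow_natCast, neg_mul]

lemma integral_pow_mul_exp_aux {b : ℝ} (hb : 0 < b) (m : ℕ) :
    ∫ u in Set.Ioi (0:ℝ), u ^ m * Real.exp (-(b * u)) = (Nat.factorial m : ℝ) / b ^ (m + 1) := by
  have h := Real.integral_rpow_mul_exp_neg_mul_Ioi (a := (m : ℝ) + 1) (by positivity) hb
  rw [add_sub_cancel_right] at h
  simp_rw [Real.rpow_natCast] at h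
  rw [h, Real.Gamma_nat_eq_factorial,
    show ((m:ℝ)+1) = ((m+1 : ℕ) : ℝ) by push_cast; ring, Real.rpow_natCast]
  rw [one_div, inv_pow]
  field_simp

end aux

section aux2

lemma szasz_integrable {n : ℕ} (hn : 0 < n) (i k : ℕ) :
    IntegrableOn (fun u : ℝ => szaszBasis n i u * u ^ k) (Set.Ioi 0) := by
  have hb : (0:ℝ) < n := by exact_mod_cast hn
  have h : IntegrableOn
      (fun u : ℝ => ((n:ℝ) ^ i / (Nat.factorial i : ℝ)) * (u ^ (i + k) * Real.exp (-((n:ℝ) * u))))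
      (Set.Ioi 0) :=
    (integrableOn_pow_mul_exp_aux hb (i + k)).const_mul ((n:ℝ) ^ i / (Nat.factorial i : ℝ))
  refine h.congr_fun (fun u hu => ?_) measurableSet_Ioi
  unfold szaszBasis
  dsimp only
  rw [mul_pow, pow_add, neg_mul]
  ring

lemma szasz_integral {n : ℕ} (hn : 0 < n) (i k : ℕ) :
    ∫ u in Set.Ioi (0:ℝ), szaszBasis n i u * u ^ k
      = (Nat.factorial (i + k) : ℝ) / (Nat.factorial i * (n:ℝ) ^ (k + 1)) := by
  have hb : (0:ℝ) < n := by exact_mod_cast hn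
  have hpt : ∀ u : ℝ, szaszBasis n i u * u ^ k
      = ((n:ℝ) ^ i / (Nat.factorial i : ℝ)) * (u ^ (i + k) * Real.exp (-((n:ℝ) * u))) := by
    intro u
    unfold szaszBasis
    rw [mul_pow, pow_add, neg_mul]
    ring
  simp_rw [hpt]
  rw [integral_const_mul, integral_pow_mul_exp_aux hb (i + k)]
  have h1 : (Nat.factorial i : ℝ) ≠ 0 := by positivity
  have h2 : (n:ℝ) ^ (i + (k+1)) ≠ 0 := by positivity
  rw [show i + k + 1 = i + (k + 1) from rfl, pow_add]
  field_simp

end aux2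

def gfun (n : ℕ) (x : ℝ) (i : ℕ) : ℝ :=
  ((i:ℝ) + 1) * ((i:ℝ) + 2) / (n:ℝ) ^ 2 - 2 * x * ((i:ℝ) + 1) / (n:ℝ) + x ^ 2

lemma szasz_sq_integral {n : ℕ} (hn : 0 < n) (x : ℝ) (i : ℕ) :
    ∫ u in Set.Ioi (0:ℝ), szaszBasis n i u * (u - x) ^ 2 = gfun n x i / n := by
  have hb : (0:ℝ) < n := by exact_mod_cast hn
  have h0 := szasz_integral hn i 0
  have h1 := szasz_integral hn i 1
  have h2 := szasz_integral hn i 2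
  have i0 := szasz_integrable hn i 0
  have i1 := szasz_integrable hn i 1
  have i2 := szasz_integrable hn i 2
  have hpt : ∀ u : ℝ, szaszBasis n i u * (u - x) ^ 2
      = szaszBasis n i u * u ^ 2 - (2 * x) * (szaszBasis n i u * u ^ 1)
        + x ^ 2 * (szaszBasis n i u * u ^ 0) := by
    intro u; ring
  simp_rw [hpt]
  rw [integral_add (by exact (i2.sub (i1.const_mul _))) (by exact i0.const_mul _),
    integral_sub i2 (by exact i1.const_mul _), integral_const_mul, integral_const_mul,
    h0, h1, h2]
  have e2 : (Nat.factorial (i + 2) : ℝ) = ((i:ℝ) + 2) * ((i:ℝ) + 1) * Nat.factorial i := by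
    rw [show i + 2 = (i+1) + 1 from rfl, Nat.factorial_succ, Nat.factorial_succ]
    push_cast; ring
  have e1 : (Nat.factorial (i + 1) : ℝ) = ((i:ℝ) + 1) * Nat.factorial i := by
    rw [Nat.factorial_succ]; push_cast; ring
  have e0 : i + 0 = i := rfl
  rw [e0, e1, e2]
  have hf : (Nat.factorial i : ℝ) ≠ 0 := by positivity
  unfold gfun
  field_simp
  ring

lemma risingFac_succ_left (x α : ℝ) (i : ℕ) :
    risingFac x α (i + 1) = x * risingFac (x + α) α i := by
  unfold risingFac
  rw [Finset.prod_range_succ']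
  simp only [Nat.cast_zero, zero_mul, add_zero, Nat.cast_add, Nat.cast_one]
  rw [mul_comm]
  congr 1
  refine Finset.prod_congr rfl fun j _ => by ring

lemma risingFac_eq (x : ℝ) {α : ℝ} (hα : α ≠ 0) (i : ℕ) :
    risingFac x α i = α ^ i * ∏ j ∈ Finset.range i, (x / α + j) := by
  unfold risingFac
  rw [show α ^ i = ∏ _j ∈ Finset.range i, α by rw [Finset.prod_const, Finset.card_range],
    ← Finset.prod_mul_distrib]
  refine Finset.prod_congr rfl fun j _ => by field_simp

lemma Gamma_prod {c : ℝ} (hc : 0 < c) (i : ℕ) :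
    Real.Gamma (c + i) = Real.Gamma c * ∏ j ∈ Finset.range i, (c + j) := by
  induction i with
  | zero => simp
  | succ k ih =>
    have hck : (0:ℝ) < c + k := by positivity
    rw [show c + ((k:ℕ)+1 : ℕ) = (c + k) + 1 by push_cast; ring,
      Real.Gamma_add_one hck.ne', ih, Finset.prod_range_succ]
    ring

lemma hasSum_binomial {c s : ℝ} (hc : 0 ≤ c) (hs0 : 0 < s) (hs1 : s < 1) :
    HasSum (fun i : ℕ => (∏ j ∈ Finset.range i, (c + j)) * s ^ i / Nat.factorial i)
      ((1 - s) ^ (-c) : ℝ) := by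
  rcases hc.eq_or_lt with rfl | hc
  · have h0 : ∀ i : ℕ, i ≠ 0 →
        (∏ j ∈ Finset.range i, ((0:ℝ) + j)) * s ^ i / Nat.factorial i = 0 := by
      intro i hi
      rw [Finset.prod_eq_zero (Finset.mem_range.2 (Nat.pos_of_ne_zero hi)) (by simp)]
      simp
    have := hasSum_single (f := fun i : ℕ =>
      (∏ j ∈ Finset.range i, ((0:ℝ) + j)) * s ^ i / Nat.factorial i) 0 h0
    simpa using this
  -- main case c > 0
  set a : ℕ → ℝ := fun i => (∏ j ∈ Finset.range i, (c + j)) * s ^ i / Nat.factorial i with ha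
  have hapos : ∀ i, 0 < a i := by
    intro i
    have : 0 < ∏ j ∈ Finset.range i, (c + (j:ℝ)) :=
      Finset.prod_pos fun j _ => by positivity
    positivity
  have hrec : ∀ i : ℕ, a (i + 1) = a i * (s * (c + i) / (i + 1)) := by
    intro i
    simp only [ha, Finset.prod_range_succ, pow_succ, Nat.factorial_succ]
    have h1 : (Nat.factorial i : ℝ) ≠ 0 := by positivity
    have h2 : ((i:ℝ) + 1) ≠ 0 := by positivity
    push_cast
    field_simp
  have hsum : Summable a := by
    refine summable_of_ratio_test_tendsto_lt_one hs1
      (Eventually.of_forall fun i => (hapos i).ne') ?_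
    have hratio : (fun i : ℕ => ‖a (i+1)‖ / ‖a i‖) = fun i : ℕ => s * ((c + i) / (i + 1)) := by
      funext i
      rw [hrec i, norm_mul, mul_comm ‖a i‖, mul_div_assoc,
        div_self (norm_ne_zero_iff.2 (hapos i).ne'), mul_one,
        Real.norm_of_nonneg (by positivity), mul_div_assoc]
    rw [hratio]
    have h0 : Tendsto (fun i : ℕ => (c + (i:ℝ)) / ((i:ℝ) + 1)) atTop (nhds 1) := by
      have hq : (fun i : ℕ => (c + (i:ℝ)) / ((i:ℝ) + 1))
          = fun i : ℕ => 1 + (c - 1) / (((i + 1 : ℕ) : ℝ)) := by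
        funext i
        have : ((i:ℝ) + 1) ≠ 0 := by positivity
        push_cast
        field_simp
        ring
      rw [hq]
      have := (tendsto_const_div_atTop_nhds_zero_nat (c - 1)).comp (tendsto_add_atTop_nat 1)
      simpa using tendsto_const_nhds.add this
    simpa using (tendsto_const_nhds (x := s)).mul h0
  -- now compute the sum via integrals
  have hG : 0 < Real.Gamma c := Real.Gamma_pos_of_pos hc
  set F : ℕ → ℝ → ℝ :=
    fun i u => Real.exp (-u) * u ^ (c - 1) * ((s * u) ^ i / Nat.factorial i) with hF
  have hFint : ∀ i, IntegrableOn (F i) (Set.Ioi 0) := by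
    intro i
    have hlt : (-1:ℝ) < c + i - 1 := by
      have : (0:ℝ) ≤ i := Nat.cast_nonneg i
      linarith
    have h : IntegrableOn
        (fun u : ℝ => (s ^ i / (Nat.factorial i : ℝ)) * (u ^ (c + i - 1) * Real.exp (-1 * u ^ (1:ℝ))))
        (Set.Ioi 0) :=
      (integrableOn_rpow_mul_exp_neg_mul_rpow (p := 1) hlt one_pos one_pos).const_mul _
    refine h.congr_fun (fun u hu => ?_) measurableSet_Ioi
    have hu' : (0:ℝ) < u := hu
    simp only [hF]
    rw [Real.rpow_one, neg_one_mul,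
      show c + i - 1 = (c - 1) + i by ring, Real.rpow_add hu', Real.rpow_natCast, mul_pow]
    ring
  have hFval : ∀ i, (∫ u in Set.Ioi (0:ℝ), F i u) = Real.Gamma c * a i := by
    intro i
    have heq : Set.EqOn (F i)
        (fun u => (s ^ i / (Nat.factorial i : ℝ)) * (u ^ ((c + i) - 1) * Real.exp (-(1 * u))))
        (Set.Ioi 0) := by
      intro u hu
      have hu' : (0:ℝ) < u := hu
      simp only [hF]
      rw [one_mul, show c + (i:ℝ) - 1 = (c - 1) + i by ring, Real.rpow_add hu',
        Real.rpow_natCast, mul_pow]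
      ring
    rw [setIntegral_congr_fun measurableSet_Ioi heq, integral_const_mul,
      Real.integral_rpow_mul_exp_neg_mul_Ioi (by positivity) one_pos,
      Gamma_prod hc i]
    simp only [ha]
    rw [div_one, Real.one_rpow]
    ring
  have hnorm : ∀ i, (∫ u in Set.Ioi (0:ℝ), ‖F i u‖) = Real.Gamma c * a i := by
    intro i
    rw [← hFval i]
    refine setIntegral_congr_fun measurableSet_Ioi fun u hu => ?_
    have hu' : (0:ℝ) < u := hu
    have h1 : (0:ℝ) ≤ u ^ (c - 1) := Real.rpow_nonneg hu'.le _
    have h2 : (0:ℝ) ≤ F i u := by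
      simp only [hF]
      positivity
    exact Real.norm_of_nonneg h2
  have hsumnorm : Summable fun i => ∫ u in Set.Ioi (0:ℝ), ‖F i u‖ :=
    ((hsum.mul_left (Real.Gamma c)).congr fun i => (hnorm i).symm)
  have hswap := MeasureTheory.hasSum_integral_of_summable_integral_norm
    (μ := volume.restrict (Set.Ioi 0)) hFint hsumnorm
  have hptsum : Set.EqOn (fun u => ∑' i, F i u)
      (fun u => u ^ (c - 1) * Real.exp (-((1 - s) * u))) (Set.Ioi 0) := by
    intro u _
    have hexp : ∑' i : ℕ, (s * u) ^ i / (Nat.factorial i : ℝ) = Real.exp (s * u) := by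
      rw [Real.exp_eq_exp_ℝ]
      exact (NormedSpace.expSeries_div_hasSum_exp (s * u)).tsum_eq
    have hmul : Real.exp (-u) * Real.exp (s * u) = Real.exp (-((1 - s) * u)) := by
      rw [← Real.exp_add]; congr 1; ring
    calc (∑' i, F i u)
        = (Real.exp (-u) * u ^ (c - 1)) * ∑' i : ℕ, (s * u) ^ i / (Nat.factorial i : ℝ) :=
          tsum_mul_left
      _ = u ^ (c - 1) * (Real.exp (-u) * Real.exp (s * u)) := by rw [hexp]; ring
      _ = u ^ (c - 1) * Real.exp (-((1 - s) * u)) := by rw [hmul]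
  have hIval : (∫ u in Set.Ioi (0:ℝ), ∑' i, F i u) = (1 - s) ^ (-c) * Real.Gamma c := by
    rw [setIntegral_congr_fun measurableSet_Ioi hptsum,
      Real.integral_rpow_mul_exp_neg_mul_Ioi hc (by linarith : (0:ℝ) < 1 - s),
      one_div, Real.inv_rpow (by linarith : (0:ℝ) ≤ 1 - s), ← Real.rpow_neg (by linarith)]
  rw [hIval] at hswap
  simp only [hFval] at hswap
  have h3 := hswap.mul_left (Real.Gamma c)⁻¹
  have hmm : ∀ i, (Real.Gamma c)⁻¹ * (Real.Gamma c * a i) = a i := fun i => by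
    field_simp
  have hvv : (Real.Gamma c)⁻¹ * ((1 - s) ^ (-c) * Real.Gamma c) = (1 - s) ^ (-c) := by
    field_simp
  simp only [hmm] at h3
  rwa [hvv] at h3

lemma hasSum_P {n : ℕ} (hn : 0 < n) {α : ℝ} (hα : 0 < α) {y : ℝ} (hy : 0 ≤ y) :
    HasSum (fun i : ℕ => risingFac y α i / Nat.factorial i * ((α + 1 / (n:ℝ))⁻¹) ^ i)
      ((1 + (n:ℝ) * α) ^ (y / α) : ℝ) := by
  have hnR : (0:ℝ) < n := by exact_mod_cast hn
  have hd : (0:ℝ) < α + 1 / n := by positivity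
  set s : ℝ := α / (α + 1 / n) with hs
  have hs0 : 0 < s := by positivity
  have hs1 : s < 1 := by
    rw [hs, div_lt_one hd]
    have : (0:ℝ) < 1 / n := by positivity
    linarith
  have hc : 0 ≤ y / α := by positivity
  have hbin := hasSum_binomial hc hs0 hs1
  have hterm : ∀ i : ℕ,
      (∏ j ∈ Finset.range i, (y / α + j)) * s ^ i / Nat.factorial i
        = risingFac y α i / Nat.factorial i * ((α + 1 / (n:ℝ))⁻¹) ^ i := by
    intro i
    rw [risingFac_eq y hα.ne' i, hs, div_eq_mul_inv α, mul_pow]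
    ring
  have hpos : (0:ℝ) < 1 + (n:ℝ) * α := by positivity
  have h1s : 1 - s = (1 + (n:ℝ) * α)⁻¹ := by
    rw [hs]
    field_simp
    ring
  have hval : (1 - s) ^ (-(y / α)) = (1 + (n:ℝ) * α) ^ (y / α) := by
    rw [h1s, Real.inv_rpow hpos.le, ← Real.rpow_neg hpos.le, neg_neg]
  rw [← hval]
  exact (funext hterm : _) ▸ hbin

end AuxLemmas


theorem stmt6 (n : ℕ) (hn : 0 < n) (α : ℝ) (hα : 0 < α) (hαn : α ≤ 1 / n)
    (x : ℝ) (hx : 0 ≤ x) :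
    theta n α 2 x ≤ 3 / n * (x + 1 / n) := by
  have hnR : (0:ℝ) < n := by exact_mod_cast hn
  set t : ℝ := (α + 1 / (n:ℝ))⁻¹ with hts
  set K : ℝ := (1 + (n:ℝ) * α) ^ (-x / α) with hKs
  have hpos : (0:ℝ) < 1 + (n:ℝ) * α := by positivity
  have hd : (0:ℝ) < α + 1 / n := by positivity
  set C : ℕ → ℝ := fun i =>
    (1 + (n:ℝ) * α) ^ (-x / α) * (α + 1 / (n:ℝ)) ^ (-(i : ℤ)) *
      (risingFac x α i / (Nat.factorial i : ℝ)) with hCs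
  have hC : ∀ i : ℕ, C i = K * (risingFac x α i / Nat.factorial i * t ^ i) := by
    intro i
    simp only [hCs, hKs, hts]
    rw [zpow_neg, zpow_natCast, ← inv_pow]
    ring
  have hK : K * (1 + (n:ℝ) * α) ^ (x / α) = 1 := by
    rw [hKs, neg_div, ← Real.rpow_add hpos, neg_add_cancel, Real.rpow_zero]
  have ht : t * (1 + (n:ℝ) * α) = n := by
    rw [hts, inv_mul_eq_div, div_eq_iff hd.ne', mul_add, mul_one_div,
      div_self hnR.ne']
    ring
  have hshift1 : (1 + (n:ℝ) * α) ^ ((x + α) / α)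
      = (1 + (n:ℝ) * α) ^ (x / α) * (1 + (n:ℝ) * α) := by
    rw [show (x + α) / α = x / α + 1 by field_simp, Real.rpow_add hpos, Real.rpow_one]
  have hshift2 : (1 + (n:ℝ) * α) ^ ((x + α + α) / α)
      = (1 + (n:ℝ) * α) ^ (x / α) * ((1 + (n:ℝ) * α) * (1 + (n:ℝ) * α)) := by
    rw [show (x + α + α) / α = x / α + (1 + 1) by field_simp; ring,
      Real.rpow_add hpos, Real.rpow_add hpos, Real.rpow_one]
  have S0 : HasSum C 1 := by
    have h := (hasSum_P hn hα hx).mul_left K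
    rw [← hts, hK] at h
    have he : (fun i : ℕ => K * (risingFac x α i / Nat.factorial i * t ^ i)) = C :=
      funext fun i => (hC i).symm
    rwa [he] at h
  have S1 : HasSum (fun i : ℕ => (i:ℝ) * C i) ((n:ℝ) * x) := by
    have h := (hasSum_P hn hα (y := x + α) (by linarith)).mul_left (K * t * x)
    rw [← hts] at h
    have hval : K * t * x * (1 + (n:ℝ) * α) ^ ((x + α) / α) = (n:ℝ) * x := by
      rw [hshift1]
      linear_combination ((n:ℝ) * x) * hK
        + (x * K * (1 + (n:ℝ) * α) ^ (x / α)) * ht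
    rw [hval] at h
    have hterm : (fun j : ℕ => K * t * x * (risingFac (x + α) α j / Nat.factorial j * t ^ j))
        = fun j : ℕ => (((j + 1 : ℕ)) : ℝ) * C (j + 1) := by
      funext j
      rw [hC, risingFac_succ_left, Nat.factorial_succ, pow_succ]
      have h1 : (Nat.factorial j : ℝ) ≠ 0 := by positivity
      push_cast
      have h2 : ((j:ℝ) + 1) ≠ 0 := by positivity
      field_simp
    rw [hterm] at h
    have h3 := (hasSum_nat_add_iff (f := fun i : ℕ => (i:ℝ) * C i) 1).mp h
    simpa using h3
  have S2 : HasSum (fun i : ℕ => (i:ℝ) * ((i:ℝ) - 1) * C i) ((n:ℝ)^2 * (x * (x + α))) := by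
    have h := (hasSum_P hn hα (y := x + α + α) (by linarith)).mul_left
      (K * (t * t) * (x * (x + α)))
    rw [← hts] at h
    have hval : K * (t * t) * (x * (x + α)) * (1 + (n:ℝ) * α) ^ ((x + α + α) / α)
        = (n:ℝ)^2 * (x * (x + α)) := by
      rw [hshift2]
      linear_combination ((n:ℝ)^2 * (x * (x + α))) * hK
        + (x * (x + α) * K * (1 + (n:ℝ) * α) ^ (x / α) * (t * (1 + (n:ℝ) * α) + n)) * ht
    rw [hval] at h
    have hterm : (fun j : ℕ => K * (t * t) * (x * (x + α)) *
          (risingFac (x + α + α) α j / Nat.factorial j * t ^ j))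
        = fun j : ℕ => (((j + 2 : ℕ)) : ℝ) * ((((j + 2 : ℕ)) : ℝ) - 1) * C (j + 2) := by
      funext j
      rw [hC, show j + 2 = (j + 1) + 1 from rfl, risingFac_succ_left, risingFac_succ_left,
        Nat.factorial_succ, Nat.factorial_succ, pow_succ, pow_succ]
      have h1 : (Nat.factorial j : ℝ) ≠ 0 := by positivity
      push_cast
      have h2 : ((j:ℝ) + 1) ≠ 0 := by positivity
      have h3 : ((j:ℝ) + 1 + 1) ≠ 0 := by positivity
      field_simp
      ring
    rw [hterm] at h
    have h4 := (hasSum_nat_add_iff (f := fun i : ℕ => (i:ℝ) * ((i:ℝ) - 1) * C i) 2).mp h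
    simpa [Finset.sum_range_succ] using h4
  have hcomb : HasSum (fun i : ℕ => C i * gfun n x i)
      (α * x + 2 * x / (n:ℝ) + 2 / (n:ℝ)^2) := by
    have h := ((S2.mul_left (1/(n:ℝ)^2)).add
        (S1.mul_left (4/(n:ℝ)^2 - 2*x/(n:ℝ)))).add
      (S0.mul_left (2/(n:ℝ)^2 - 2*x/(n:ℝ) + x^2))
    have hfun : (fun i : ℕ =>
        (1/(n:ℝ)^2 * ((i:ℝ) * ((i:ℝ) - 1) * C i)
          + (4/(n:ℝ)^2 - 2*x/(n:ℝ)) * ((i:ℝ) * C i))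
          + (2/(n:ℝ)^2 - 2*x/(n:ℝ) + x^2) * C i)
        = fun i : ℕ => C i * gfun n x i := by
      funext i
      unfold gfun
      ring
    rw [hfun] at h
    have hv : (1/(n:ℝ)^2 * ((n:ℝ)^2 * (x * (x + α)))
          + (4/(n:ℝ)^2 - 2*x/(n:ℝ)) * ((n:ℝ) * x))
          + (2/(n:ℝ)^2 - 2*x/(n:ℝ) + x^2) * 1
        = α * x + 2 * x / (n:ℝ) + 2 / (n:ℝ)^2 := by
      field_simp
      ring
    rwa [hv] at h
  have hint : ∀ i : ℕ, (∫ u in Set.Ioi (0:ℝ), szaszBasis n i u * (u - x) ^ 2)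
      = gfun n x i / n := fun i => szasz_sq_integral hn x i
  simp only [theta, U]
  have hts2 : ∑' i : ℕ, (1 + (n:ℝ) * α) ^ (-x / α) * (α + 1 / (n:ℝ)) ^ (-(i : ℤ)) *
      (risingFac x α i / (Nat.factorial i : ℝ)) *
      ∫ u in Set.Ioi (0:ℝ), szaszBasis n i u * (u - x) ^ 2
      = (α * x + 2 * x / (n:ℝ) + 2 / (n:ℝ)^2) / n := by
    rw [tsum_congr (g := fun i : ℕ => C i * gfun n x i / (n:ℝ)) fun i => by
      simp only [hCs]
      rw [hint i, mul_div_assoc]]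
    exact (hcomb.div_const _).tsum_eq
  rw [hts2]
  have hcancel : (n:ℝ) * ((α * x + 2 * x / (n:ℝ) + 2 / (n:ℝ)^2) / n)
      = α * x + 2 * x / (n:ℝ) + 2 / (n:ℝ)^2 := by
    field_simp
  rw [hcancel]
  have h1 : α * x ≤ x / n := by
    have := mul_le_mul_of_nonneg_left hαn hx
    rw [mul_one_div] at this
    linarith
  have h2 : (0:ℝ) < 1 / (n:ℝ)^2 := by positivity
  have hrhs : 3 / (n:ℝ) * (x + 1/n) = 3 * x / n + 3 / (n:ℝ)^2 := by
    field_simp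
  rw [hrhs]
  have e1 : 3 * x / (n:ℝ) = x / n + 2 * x / n := by ring
  have e2 : 3 / (n:ℝ)^2 = 1 / (n:ℝ)^2 + 2 / (n:ℝ)^2 := by ring
  rw [e1, e2]
  linarith
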